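/- In the setting of the previous double-cover lemma: if (K, f) is minimal (every orbit is dense in K) and K̂ is not the disjoint union of two nonempty f̂-invariant compact sets A and σ(A), then (K̂, f̂) is minimal. -/
import Mathlib


open Set

/-- Double cover setting: `π : K̂ → K` a two-fold covering with deck involution
`σ`, `f̂` a lift of `f` commuting with `σ`. If `(K, f)` is minimal (every
nonempty closed invariant set is everything) and `K̂` is not the disjoint union
of two nonempty invariant compact sets `A` and `σ(A)`, then `(K̂, f̂)` is
minimal. -/
theorem stmt8 {K Khat : Type*} [MetricSpace K] [CompactSpace K]
    [MetricSpace Khat] [CompactSpace Khat]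
    (f : K ≃ₜ K) (fhat : Khat ≃ₜ Khat) (σ : Khat ≃ₜ Khat) (π : Khat → K)
    (hπcont : Continuous π) (hπsurj : Function.Surjective π)
    (hπσ : ∀ a, π (σ a) = π a) (hσinv : ∀ a, σ (σ a) = a)
    (hσfree : ∀ a, σ a ≠ a)
    (hfib : ∀ a b, π a = π b → b = a ∨ b = σ a)
    (hlift : ∀ a, π (fhat a) = f (π a))
    (hcomm : ∀ a, fhat (σ a) = σ (fhat a))
    (hnosplit : ¬ ∃ A : Set Khat, A.Nonempty ∧ IsClosed A ∧ ⇑fhat '' A = A ∧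
        (⇑σ '' A) ∩ A = ∅ ∧ A ∪ ⇑σ '' A = univ)
    (hmin : ∀ A : Set K, IsClosed A → A.Nonempty → ⇑f '' A = A → A = univ) :
    ∀ A : Set Khat, IsClosed A → A.Nonempty → ⇑fhat '' A = A → A = univ := by
  intro A hAclosed hAne hAinv
  -- key: the projection of any nonempty closed invariant set is all of K
  have key : ∀ B : Set Khat, IsClosed B → B.Nonempty → ⇑fhat '' B = B →
      π '' B = univ := by
    intro B hc hne hinv
    apply hmin _ (hc.isCompact.image hπcont).isClosed (hne.image π)
    calc ⇑f '' (π '' B) = (fun a => π (fhat a)) '' B := by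
          rw [image_image]; exact image_congr fun a _ => (hlift a).symm
      _ = π '' (⇑fhat '' B) := by rw [image_image]
      _ = π '' B := by rw [hinv]
  -- σ '' A is fhat-invariant
  have hσAinv : ⇑fhat '' (⇑σ '' A) = ⇑σ '' A := by
    calc ⇑fhat '' (⇑σ '' A) = (fun a => fhat (σ a)) '' A := by rw [image_image]
      _ = (fun a => σ (fhat a)) '' A := image_congr fun a _ => hcomm a
      _ = ⇑σ '' (⇑fhat '' A) := by rw [image_image]
      _ = ⇑σ '' A := by rw [hAinv]
  by_cases hB : (A ∩ ⇑σ '' A).Nonempty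
  · -- then every fiber over K meets A ∩ σ(A), hence lies entirely in A
    have hBclosed : IsClosed (A ∩ ⇑σ '' A) :=
      hAclosed.inter (hAclosed.isCompact.image σ.continuous).isClosed
    have hBinv : ⇑fhat '' (A ∩ ⇑σ '' A) = A ∩ ⇑σ '' A := by
      rw [Set.image_inter fhat.injective, hAinv, hσAinv]
    have hπB := key _ hBclosed hB hBinv
    ext x
    simp only [mem_univ, iff_true]
    have hx : π x ∈ π '' (A ∩ ⇑σ '' A) := by rw [hπB]; trivial
    obtain ⟨b, ⟨hbA, hbσ⟩, hbx⟩ := hx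
    obtain ⟨a, haA, hab⟩ := hbσ
    rcases hfib b x hbx with h | h
    · exact h ▸ hbA
    · have : σ b ∈ A := by
        rw [← hab, hσinv]; exact haA
      exact h ▸ this
  · -- otherwise A and σ(A) form a forbidden splitting
    exfalso
    apply hnosplit
    refine ⟨A, hAne, hAclosed, hAinv, ?_, ?_⟩
    · rw [Set.inter_comm]
      exact not_nonempty_iff_eq_empty.mp hB
    · have hπA := key _ hAclosed hAne hAinv
      ext x
      simp only [mem_univ, iff_true]
      have hx : π x ∈ π '' A := by rw [hπA]; trivial
      obtain ⟨a, haA, hax⟩ := hx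
      rcases hfib a x hax with h | h
      · exact Or.inl (h ▸ haA)
      · exact Or.inr ⟨a, haA, h.symm⟩
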